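/- Let ρ^FS be a fastest simplest route on the road network G_R from node n_s to node n_t, and let ρ_E^{FS*} denote its special expanded route. Then there exists no expanded route that starts from (n_s, r_i) and ends at (n_t, r_j), for any r_i ∈ R(n_s) and any r_j ∈ R(n_t), that is FS-shorter than ρ_E^{FS*}. -/

import Mathlib

/-- A road network: a directed graph on node type `V` together with a set of
roads `R`, a membership relation `onRoad`, a unique road `roadOf x y` for each
edge `(x, y)`, a positive length `len` on edges, and a turn-cost function
`turn` with values in `[0,1]` that vanishes when staying on the same road. -/
structure RoadNetwork (V R : Type) where
  edge : V → V → Prop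
  onRoad : V → R → Prop
  roadOf : V → V → R
  len : V → V → ℝ
  turn : V → R → R → ℝ
  onRoad_nonempty : ∀ n : V, ∃ r : R, onRoad n r
  len_pos : ∀ ⦃x y : V⦄, edge x y → 0 < len x y
  turn_nonneg : ∀ (n : V) (r₁ r₂ : R), onRoad n r₁ → onRoad n r₂ → 0 ≤ turn n r₁ r₂
  turn_le_one : ∀ (n : V) (r₁ r₂ : R), onRoad n r₁ → onRoad n r₂ → turn n r₁ r₂ ≤ 1
  turn_self : ∀ (n : V) (r : R), turn n r r = 0
  edge_onRoad_left : ∀ ⦃x y : V⦄, edge x y → onRoad x (roadOf x y)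
  edge_onRoad_right : ∀ ⦃x y : V⦄, edge x y → onRoad y (roadOf x y)

namespace RoadNetwork

variable {V R : Type}

/-- A route is a nonempty sequence of nodes every consecutive pair of which is an edge. -/
def IsRoute (N : RoadNetwork V R) (ρ : List V) : Prop :=
  ρ ≠ [] ∧ ρ.Chain' N.edge

/-- The length of a route: the sum of the lengths of its edges. -/
def routeLen (N : RoadNetwork V R) (ρ : List V) : ℝ :=
  ((ρ.zip ρ.tail).map fun p => N.len p.1 p.2).sum

/-- The complexity of a route: the sum of the turn costs at its internal nodes. -/
def routeCpl (N : RoadNetwork V R) (ρ : List V) : ℝ :=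
  ((ρ.zip (ρ.tail.zip ρ.tail.tail)).map fun p =>
    N.turn p.2.1 (N.roadOf p.1 p.2.1) (N.roadOf p.2.1 p.2.2)).sum

/-- A route from `a` to `b`. -/
def RouteFromTo (N : RoadNetwork V R) (ρ : List V) (a b : V) : Prop :=
  N.IsRoute ρ ∧ ρ.head? = some a ∧ ρ.getLast? = some b

/-- Edges of the expanded graph: from `(n_x, r_i)` to `(n_y, r_j)` whenever
`r_i, r_j ∈ R(n_x)` and `(n_x, n_y)` is an edge lying on road `r_j`. -/
def expEdge (N : RoadNetwork V R) (a b : V × R) : Prop :=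
  N.onRoad a.1 a.2 ∧ N.onRoad a.1 b.2 ∧ N.edge a.1 b.1 ∧ N.roadOf a.1 b.1 = b.2

/-- An expanded route: a nonempty path in the expanded graph. -/
def IsExpRoute (N : RoadNetwork V R) (σ : List (V × R)) : Prop :=
  σ ≠ [] ∧ σ.Chain' N.expEdge ∧ ∀ a ∈ σ, N.onRoad a.1 a.2

/-- The length of an expanded route: the sum of the lengths of its edges. -/
def expLen (N : RoadNetwork V R) (σ : List (V × R)) : ℝ :=
  ((σ.zip σ.tail).map fun p => N.len p.1.1 p.2.1).sum

/-- The complexity of an expanded route: the sum of the turn costs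
`C(n_x, r_i, r_j)` over its edges `((n_x, r_i), (n_y, r_j))`. -/
def expCpl (N : RoadNetwork V R) (σ : List (V × R)) : ℝ :=
  ((σ.zip σ.tail).map fun p => N.turn p.1.1 p.1.2 p.2.2).sum

/-- An expanded route from `a` to `b`. -/
def ExpRouteFromTo (N : RoadNetwork V R) (σ : List (V × R)) (a b : V × R) : Prop :=
  N.IsExpRoute σ ∧ σ.head? = some a ∧ σ.getLast? = some b

/-- `σ ∈ E(ρ)`: the expanded routes associated with route `ρ`; the `k`-th
expanded node (for `k > 1`) is `(n_k, R(n_{k-1}, n_k))`, while the first is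
`(n_1, r)` for an arbitrary road `r ∈ R(n_1)`. -/
def InExpansion (N : RoadNetwork V R) (ρ : List V) (σ : List (V × R)) : Prop :=
  σ.map Prod.fst = ρ ∧ (∀ a ∈ σ, N.onRoad a.1 a.2) ∧
  ∀ (k : ℕ) (h : k + 1 < σ.length),
    (σ.get ⟨k + 1, h⟩).2 =
      N.roadOf (σ.get ⟨k, Nat.lt_of_succ_lt h⟩).1 (σ.get ⟨k + 1, h⟩).1

/-- The special expanded route `ρ_E* ∈ E(ρ)`: its first expanded node is
`(n_1, R(n_1, n_2))`. -/
def IsSpecialExpansion (N : RoadNetwork V R) (ρ : List V) (σ : List (V × R)) : Prop :=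
  N.InExpansion ρ σ ∧
  ∀ (h : 1 < σ.length),
    (σ.get ⟨0, Nat.lt_of_succ_lt h⟩).2 =
      N.roadOf (σ.get ⟨0, Nat.lt_of_succ_lt h⟩).1 (σ.get ⟨1, h⟩).1

end RoadNetwork

/-- `(c₁, l₁) <_FS (c₂, l₂)`: FS-shorter, i.e. lower complexity, or equal
complexity and smaller length. -/
def FSshorter (c₁ l₁ c₂ l₂ : ℝ) : Prop := c₁ < c₂ ∨ (c₁ = c₂ ∧ l₁ < l₂)

namespace RoadNetwork

variable {V R : Type}

/-- A simplest route from `a` to `b`: a route of minimum complexity. -/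
def IsSimplest (N : RoadNetwork V R) (ρ : List V) (a b : V) : Prop :=
  N.RouteFromTo ρ a b ∧ ∀ ρ' : List V, N.RouteFromTo ρ' a b → N.routeCpl ρ ≤ N.routeCpl ρ'

/-- A fastest simplest route from `a` to `b`: of minimum length among the simplest routes. -/
def IsFastestSimplest (N : RoadNetwork V R) (ρ : List V) (a b : V) : Prop :=
  N.IsSimplest ρ a b ∧ ∀ ρ' : List V, N.IsSimplest ρ' a b → N.routeLen ρ ≤ N.routeLen ρ'

end RoadNetwork


namespace RoadNetwork

variable {V R : Type}

lemma expLen_eq_aux (N : RoadNetwork V R) (σ : List (V × R)) :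
    N.expLen σ = N.routeLen (σ.map Prod.fst) := by
  induction σ with
  | nil => rfl
  | cons a l ih =>
    cases l with
    | nil => rfl
    | cons b l' =>
      simp only [expLen, routeLen, List.map_cons, List.tail_cons, List.zip_cons_cons,
        List.map_cons, List.sum_cons] at *
      rw [ih]

lemma expCpl_cons_cons_aux (N : RoadNetwork V R) (a b : V × R) (l : List (V × R))
    (h : (a :: b :: l).Chain' (fun x y => y.2 = N.roadOf x.1 y.1)) :
    N.expCpl (a :: b :: l) =
      N.turn a.1 a.2 b.2 + N.routeCpl ((a :: b :: l).map Prod.fst) := by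
  induction l generalizing a b with
  | nil => simp [expCpl, routeCpl]
  | cons c l' ih =>
    have hab : b.2 = N.roadOf a.1 b.1 := (List.isChain_cons_cons.mp h).1
    have h' := (List.isChain_cons_cons.mp h).2
    have hbc : c.2 = N.roadOf b.1 c.1 := (List.isChain_cons_cons.mp h').1
    have e1 : N.expCpl (a :: b :: c :: l') = N.turn a.1 a.2 b.2 + N.expCpl (b :: c :: l') := by
      simp [expCpl]
    have e2 : N.routeCpl ((a :: b :: c :: l').map Prod.fst) =
        N.turn b.1 (N.roadOf a.1 b.1) (N.roadOf b.1 c.1) +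
          N.routeCpl ((b :: c :: l').map Prod.fst) := by
      simp [routeCpl]
    rw [e1, ih b c h', e2, ← hab, ← hbc]

end RoadNetwork

/-- **Theorem 1.** Let `ρFS` be a fastest simplest route from `n_s` to `n_t`
and `σ` its special expanded route. Then no expanded route from `(n_s, r_i)`
to `(n_t, r_j)`, for any `r_i ∈ R(n_s)` and `r_j ∈ R(n_t)`, is FS-shorter
than `σ`. -/
theorem no_expanded_route_FSshorter_than_special_of_fastest_simplest
    {V R : Type} [Fintype V] [Fintype R]
    (N : RoadNetwork V R) (ns nt : V) (ρFS : List V) (σ : List (V × R))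
    (hFS : N.IsFastestSimplest ρFS ns nt)
    (hσ : N.IsSpecialExpansion ρFS σ) :
    ¬ ∃ (σ' : List (V × R)) (ri rj : R),
        N.onRoad ns ri ∧ N.onRoad nt rj ∧
        N.ExpRouteFromTo σ' (ns, ri) (nt, rj) ∧
        FSshorter (N.expCpl σ') (N.expLen σ') (N.expCpl σ) (N.expLen σ) := by
  rintro ⟨σ', ri, rj, hri, hrj, ⟨⟨hne, hchain, hon'⟩, hhead, hlast⟩, hlt⟩
  obtain ⟨⟨hρroute, hsimp⟩, hfast⟩ := hFS
  obtain ⟨⟨hmap, hon, hroad⟩, hspec⟩ := hσ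
  -- σ satisfies the road-chain condition
  have hchσ : σ.Chain' (fun x y => y.2 = N.roadOf x.1 y.1) := by
    rw [List.Chain', List.isChain_iff_getElem]
    intro i hi
    exact hroad i (by omega)
  -- expCpl σ = routeCpl ρFS and expLen σ = routeLen ρFS
  have hlen_σ : N.expLen σ = N.routeLen ρFS := by
    rw [N.expLen_eq_aux, hmap]
  have hcpl_σ : N.expCpl σ = N.routeCpl ρFS := by
    match σ, hchσ, hspec, hroad, hmap with
    | [], _, _, _, hmap =>
      simp [RoadNetwork.expCpl, ← hmap, RoadNetwork.routeCpl]
    | [a], _, _, _, hmap =>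
      simp [RoadNetwork.expCpl, ← hmap, RoadNetwork.routeCpl]
    | a :: b :: l, hchσ, hspec, hroad, hmap =>
      have h1 : (1 : ℕ) < (a :: b :: l).length := by simp
      have ha : a.2 = N.roadOf a.1 b.1 := hspec h1
      have hb : b.2 = N.roadOf a.1 b.1 := hroad 0 h1
      rw [N.expCpl_cons_cons_aux a b l hchσ, hmap.symm, ha, hb, N.turn_self, zero_add]
  -- the projected route ρ'
  set ρ' := σ'.map Prod.fst with hρ'
  have hρ'route : N.RouteFromTo ρ' ns nt := by
    refine ⟨⟨by simpa [hρ'] using hne, ?_⟩, ?_, ?_⟩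
    · rw [hρ', List.Chain', List.isChain_map]
      exact hchain.imp fun _ _ h => h.2.2.1
    · rw [hρ', List.head?_map, hhead]; rfl
    · rw [hρ', List.getLast?_map, hlast]; rfl
  have hlen' : N.expLen σ' = N.routeLen ρ' := N.expLen_eq_aux σ'
  have hcpl' : N.routeCpl ρ' ≤ N.expCpl σ' := by
    match σ', hchain, hρ' with
    | [], _, hρ' => exact absurd rfl hne
    | [a], _, hρ' =>
      simp [RoadNetwork.expCpl, hρ', RoadNetwork.routeCpl]
    | a :: b :: l, hchain, hρ' =>
      have hch2 : (a :: b :: l).Chain' (fun x y => y.2 = N.roadOf x.1 y.1) :=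
        hchain.imp fun _ _ h => h.2.2.2.symm
      have hed : N.expEdge a b := (List.isChain_cons_cons.mp hchain).1
      have ht : 0 ≤ N.turn a.1 a.2 b.2 := N.turn_nonneg _ _ _ hed.1 hed.2.1
      rw [N.expCpl_cons_cons_aux a b l hch2, hρ']
      linarith
  have hle : N.routeCpl ρFS ≤ N.routeCpl ρ' := hsimp ρ' hρ'route
  rcases hlt with hlt | ⟨heq, hlt⟩
  · linarith [hcpl', hle, hcpl_σ ▸ hlt]
  · have hcple : N.routeCpl ρ' = N.routeCpl ρFS := by
      rw [hcpl_σ] at heq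
      linarith
    have hsimp' : N.IsSimplest ρ' ns nt :=
      ⟨hρ'route, fun ρ'' h => hcple ▸ hsimp ρ'' h⟩
    have := hfast ρ' hsimp'
    rw [hcpl_σ, hlen_σ] at *
    linarith
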